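/- Let F ∈ {ℝ, ℂ}, let I₁, I₂ be disjoint finite sets, and let 𝒱 be a linear subspace of F^{I₁} ⊗ F^{I₂} (identified with I₁ × I₂ matrices) such that every element of 𝒱 has rank at most 1. If 𝒱 contains a nonzero element u* ⊗ v* (with u* ∈ F^{I₁}, v* ∈ F^{I₂} nonzero), then every T ∈ 𝒱 is of the form u* ⊗ x for some x ∈ F^{I₂}, or of the form y ⊗ v* for some y ∈ F^{I₁}. -/

import Mathlib

open Matrix

private lemma minor_zero {F : Type*} [Field F] {m n : ℕ}
    (M : Matrix (Fin m) (Fin n) F) (h : Matrix.rank M ≤ 1)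
    (i i' : Fin m) (j j' : Fin n) :
    M i j * M i' j' = M i j' * M i' j := by
  rw [Matrix.rank_eq_finrank_span_cols] at h
  set W : Submodule F (Fin m → F) := Submodule.span F (Set.range Mᵀ)
  have hc : (Mᵀ j) ∈ W := Submodule.subset_span ⟨j, rfl⟩
  have hc' : (Mᵀ j') ∈ W := Submodule.subset_span ⟨j', rfl⟩
  have hdep : ¬ LinearIndependent F ![Mᵀ j, Mᵀ j'] := by
    intro hli
    have h2 : Module.finrank F (Submodule.span F (Set.range ![Mᵀ j, Mᵀ j'])) = 2 := by
      rw [finrank_span_eq_card hli]; simp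
    have hle : Submodule.span F (Set.range ![Mᵀ j, Mᵀ j']) ≤ W := by
      rw [Submodule.span_le]
      rintro x ⟨k, rfl⟩
      fin_cases k
      · simpa using hc
      · simpa using hc'
    have := Submodule.finrank_mono hle
    have h' : Module.finrank F W ≤ 1 := h
    omega
  rw [LinearIndependent.pair_iff] at hdep
  push_neg at hdep
  obtain ⟨s, t, hst, hne⟩ := hdep
  have hrow : ∀ i : Fin m, s * M i j + t * M i j' = 0 := by
    intro i
    have := congrFun hst i
    simpa [Matrix.transpose_apply] using this
  rcases eq_or_ne s 0 with hs | hs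
  · have ht : t ≠ 0 := hne hs
    have h1 : M i j' = 0 := by have := hrow i; rw [hs, zero_mul, zero_add] at this; exact (mul_eq_zero.mp this).resolve_left ht
    have h2 : M i' j' = 0 := by have := hrow i'; rw [hs, zero_mul, zero_add] at this; exact (mul_eq_zero.mp this).resolve_left ht
    simp [h1, h2]
  · have h1 : M i j = -(t / s) * M i j' := by
      have := hrow i; field_simp at this ⊢; linear_combination this
    have h2 : M i' j = -(t / s) * M i' j' := by
      have := hrow i'; field_simp at this ⊢; linear_combination this
    rw [h1, h2]; ring

private lemma rank_one_decomp {F : Type*} [Field F] {m n : ℕ}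
    {M : Matrix (Fin m) (Fin n) F} (h : Matrix.rank M ≤ 1) (hM : M ≠ 0) :
    ∃ (a : Fin m → F) (b : Fin n → F), a ≠ 0 ∧ b ≠ 0 ∧ M = Matrix.vecMulVec a b := by
  have : ∃ i j, M i j ≠ 0 := by
    by_contra hc; push_neg at hc
    exact hM (by ext i j; simpa using hc i j)
  obtain ⟨i₀, j₀, h0⟩ := this
  refine ⟨fun i => M i j₀, fun j => M i₀ j / M i₀ j₀, ?_, ?_, ?_⟩
  · intro h; exact h0 (by simpa using congrFun h i₀)
  · intro h
    have := congrFun h j₀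
    simp [div_self h0] at this
  · ext i j
    have := minor_zero M h i i₀ j j₀
    simp only [Matrix.vecMulVec_apply]
    field_simp
    linear_combination this

/-- Let `F ∈ {ℝ, ℂ}` (formalised via `RCLike`) and let `V` be a linear
subspace of the space of `m × n` matrices over `F` (identified with `F^{I₁} ⊗ F^{I₂}`)
such that every element of `V` has rank at most 1. If `V` contains an element `u* ⊗ v*`
with `u*, v*` nonzero (so this element is nonzero), then every `T ∈ V` is of the form
`u* ⊗ x` for some `x`, or of the form `y ⊗ v*` for some `y`. Here `u ⊗ v` is the matrix
`vecMulVec u v` with entries `u(i)·v(j)`. -/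
theorem stmt10 (F : Type*) [RCLike F] (m n : ℕ)
    (V : Submodule F (Matrix (Fin m) (Fin n) F))
    (hrank : ∀ T ∈ V, Matrix.rank T ≤ 1)
    (u : Fin m → F) (v : Fin n → F) (hu : u ≠ 0) (hv : v ≠ 0)
    (hmem : Matrix.vecMulVec u v ∈ V) :
    ∀ T ∈ V, (∃ x : Fin n → F, T = Matrix.vecMulVec u x) ∨
      (∃ y : Fin m → F, T = Matrix.vecMulVec y v) := by
  intro T hT
  rcases eq_or_ne T 0 with rfl | hT0
  · exact Or.inl ⟨0, by ext i j; simp [Matrix.vecMulVec_apply]⟩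
  obtain ⟨a, b, ha, hb, rfl⟩ := rank_one_decomp (hrank T hT) hT0
  -- the sum is in V, so all its 2×2 minors vanish
  have hsum : Matrix.vecMulVec u v + Matrix.vecMulVec a b ∈ V := V.add_mem hmem hT
  have hminor : ∀ (i i' : Fin m) (j j' : Fin n),
      (u i * a i' - u i' * a i) * (v j * b j' - v j' * b j) = 0 := by
    intro i i' j j'
    have := minor_zero _ (hrank _ hsum) i i' j j'
    simp only [Matrix.add_apply, Matrix.vecMulVec_apply] at this
    ring_nf
    ring_nf at this
    linear_combination this
  by_cases hpar : ∀ i i' : Fin m, u i * a i' = u i' * a i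
  · -- a is parallel to u
    obtain ⟨i₀, hi₀⟩ := Function.ne_iff.mp hu
    simp only [Pi.zero_apply] at hi₀
    refine Or.inl ⟨(a i₀ / u i₀) • b, ?_⟩
    ext i j
    simp only [Matrix.vecMulVec_apply, Pi.smul_apply, smul_eq_mul]
    have := hpar i₀ i
    field_simp
    linear_combination b j * this
  · push_neg at hpar
    obtain ⟨i, i', hne⟩ := hpar
    have hvb : ∀ j j' : Fin n, v j * b j' = v j' * b j := by
      intro j j'
      have := hminor i i' j j'
      have h2 : u i * a i' - u i' * a i ≠ 0 := sub_ne_zero.mpr hne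
      have := mul_eq_zero.mp this
      rcases this with h | h
      · exact absurd h h2
      · linear_combination h
    obtain ⟨j₀, hj₀⟩ := Function.ne_iff.mp hv
    simp only [Pi.zero_apply] at hj₀
    refine Or.inr ⟨(b j₀ / v j₀) • a, ?_⟩
    ext i'' j
    simp only [Matrix.vecMulVec_apply, Pi.smul_apply, smul_eq_mul]
    have := hvb j₀ j
    field_simp
    linear_combination a i'' * this
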